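/- Let n be even and f : 𝔽₂ⁿ → ℤ₄ be gbent, written as f(x) = a₁(x) + 2a₂(x) with a₁, a₂ : 𝔽₂ⁿ → 𝔽₂. Then both Boolean functions a₂ and a₁ ⊕ a₂ are bent, i.e., |W_{a₂}(u)| = |W_{a₁⊕a₂}(u)| = 2^{n/2} for all u ∈ 𝔽₂ⁿ. -/

import Mathlib

open Finset Complex

/-- Standard inner product on `𝔽₂ⁿ`. -/
def ip {n : ℕ} (u x : Fin n → ZMod 2) : ZMod 2 := ∑ i, u i * x i

/-- Walsh–Hadamard transform of a Boolean function. -/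
noncomputable def WHT {n : ℕ} (g : (Fin n → ZMod 2) → ZMod 2) (u : Fin n → ZMod 2) : ℂ :=
  ∑ x : Fin n → ZMod 2, (-1 : ℂ) ^ ((g x + ip u x).val)

/-- Generalized Walsh–Hadamard transform of `f : 𝔽₂ⁿ → ℤ_q`. -/
noncomputable def GWT {n : ℕ} (q : ℕ) [NeZero q] (f : (Fin n → ZMod 2) → ZMod q)
    (u : Fin n → ZMod 2) : ℂ :=
  ∑ x : Fin n → ZMod 2,
    Complex.exp (2 * Real.pi * Complex.I * ((f x).val : ℂ) / (q : ℂ)) *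
      (-1 : ℂ) ^ ((ip u x).val)

lemma val01 (a : ZMod 2) : a.val = 0 ∨ a.val = 1 := by
  have := ZMod.val_lt a; omega

lemma expI4 (k : ℕ) : Complex.exp (2 * Real.pi * Complex.I * (k : ℂ) / 4) = I ^ k := by
  have h1 : Complex.exp ((Real.pi/2 : ℝ) * I) = I := by
    rw [Complex.exp_mul_I]
    push_cast
    rw [Complex.cos_pi_div_two, Complex.sin_pi_div_two]
    ring
  have : (2 * Real.pi * Complex.I * (k : ℂ) / 4) = (k : ℕ) * ((Real.pi/2 : ℝ) * I) := by
    push_cast; ring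
  rw [this, Complex.exp_nat_mul, h1]

lemma negpow_mod {R : Type*} [Monoid R] [HasDistribNeg R] (m : ℕ) :
    ((-1:R)) ^ (m % 2) = (-1)^m := by
  conv_rhs => rw [← Nat.div_add_mod m 2, pow_add, pow_mul]
  simp

lemma negpow_add (x y : ZMod 2) : ((-1:ℂ)) ^ (x+y).val = (-1)^x.val * (-1)^y.val := by
  rw [ZMod.val_add, negpow_mod, pow_add]

lemma val_lift (p q : ℕ) (hp : p ≤ 1) (hq : q ≤ 1) :
    (((p : ZMod 4) + 2*(q : ZMod 4)).val : ℕ) = p + 2*q := by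
  interval_cases p <;> interval_cases q <;> rfl

lemma key (a b w : ZMod 2) :
    Complex.exp (2 * Real.pi * Complex.I * ((((a.val : ZMod 4) + 2*(b.val : ZMod 4)).val : ℂ)) / 4) * (-1:ℂ)^(w.val)
      = (1+I)/2 * (-1:ℂ)^((b+w).val) + (1-I)/2 * (-1:ℂ)^((a + b + w).val) := by
  rw [expI4, negpow_add, negpow_add, negpow_add,
    val_lift a.val b.val (by have := ZMod.val_lt a; omega) (by have := ZMod.val_lt b; omega)]
  rcases val01 a with ha | ha <;> rcases val01 b with hb | hb <;> rcases val01 w with hw | hw <;>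
    rw [ha, hb, hw] <;> norm_num [pow_succ, Complex.I_sq] <;> ring

/-- Integer-valued Walsh transform. -/
def WZ {n : ℕ} (g : (Fin n → ZMod 2) → ZMod 2) (u : Fin n → ZMod 2) : ℤ :=
  ∑ x : Fin n → ZMod 2, (-1 : ℤ) ^ ((g x + ip u x).val)

lemma WHT_eq_WZ {n : ℕ} (g : (Fin n → ZMod 2) → ZMod 2) (u : Fin n → ZMod 2) :
    WHT g u = ((WZ g u : ℤ) : ℂ) := by
  unfold WHT WZ; push_cast; rfl

lemma sq_of_sq_add_sq : ∀ (k : ℕ) (a b : ℤ), a^2 + b^2 = 2 * 4^k → a^2 = 4^k := by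
  intro k
  induction k with
  | zero =>
    intro a b h
    norm_num at h ⊢
    have h1 : a ≤ 1 := by nlinarith [sq_nonneg b]
    have h2 : -1 ≤ a := by nlinarith [sq_nonneg b]
    have h3 : b ≤ 1 := by nlinarith [sq_nonneg a]
    have h4 : -1 ≤ b := by nlinarith [sq_nonneg a]
    interval_cases a <;> interval_cases b <;> omega
  | succ k ih =>
    intro a b h
    have hae : Even a ∧ Even b := by
      rcases Int.even_or_odd a with ha | ha
      · rcases Int.even_or_odd b with hb | hb
        · exact ⟨ha, hb⟩
        · exfalso
          obtain ⟨m, hm⟩ := ha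
          obtain ⟨l, hl⟩ := hb
          have h2 : a^2 = 4*m^2 := by rw [hm]; ring
          have h3 : b^2 = 4*(l^2+l) + 1 := by rw [hl]; ring
          have := Int.even_mul_succ_self l
          obtain ⟨t, ht⟩ := this
          have h5 : (4:ℤ)^(k+1) = 4 * 4^k := by ring
          omega
      · exfalso
        obtain ⟨m, hm⟩ := ha
        have h2 : a^2 = 4*(m^2+m) + 1 := by rw [hm]; ring
        have := Int.even_mul_succ_self m
        obtain ⟨t, ht⟩ := this
        rcases Int.even_or_odd b with hb | hb
        · obtain ⟨l, hl⟩ := hb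
          have h3 : b^2 = 4*l^2 := by rw [hl]; ring
          have h5 : (4:ℤ)^(k+1) = 4 * 4^k := by ring
          omega
        · obtain ⟨l, hl⟩ := hb
          have h3 : b^2 = 4*(l^2+l) + 1 := by rw [hl]; ring
          have := Int.even_mul_succ_self l
          obtain ⟨s, hs⟩ := this
          have h5 : (4:ℤ)^(k+1) = 4 * 4^k := by ring
          omega
    obtain ⟨⟨m, hm⟩, ⟨l, hl⟩⟩ := hae
    have heq : m^2 + l^2 = 2 * 4^k := by
      have : (m+m)^2 + (l+l)^2 = 2 * 4^(k+1) := by rw [← hm, ← hl]; exact h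
      have h5 : (4:ℤ)^(k+1) = 4 * 4^k := by ring
      nlinarith
    have h6 := ih m l heq
    have h5 : (4:ℤ)^(k+1) = 4 * 4^k := by ring
    rw [hm, h5]
    linear_combination (4:ℤ) * h6

lemma abs_of_sq {c : ℝ} (x : ℂ) (hc : 0 ≤ c) (hx : ‖x‖ ^ 2 = c ^ 2) :
    ‖x‖ = c := by
  have h0 := norm_nonneg x
  nlinarith [hx, h0, hc]

theorem components_bent_of_gbent_z4 (n : ℕ) (hn : Even n)
    (a1 a2 : (Fin n → ZMod 2) → ZMod 2) (f : (Fin n → ZMod 2) → ZMod 4)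
    (hf : ∀ x, f x = ((a1 x).val : ZMod 4) + 2 * ((a2 x).val : ZMod 4))
    (hgb : ∀ u, ‖GWT 4 f u‖ = 2 ^ (n / 2)) :
    ∀ u, ‖WHT a2 u‖ = 2 ^ (n / 2) ∧
      ‖WHT (fun x => a1 x + a2 x) u‖ = 2 ^ (n / 2) := by
  intro u
  obtain ⟨m, hm⟩ := hn
  set b : (Fin n → ZMod 2) → ZMod 2 := fun x => a1 x + a2 x with hb
  -- decomposition
  have hdec : GWT 4 f u = (1+I)/2 * WHT a2 u + (1-I)/2 * WHT b u := by
    unfold GWT WHT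
    rw [Finset.mul_sum, Finset.mul_sum, ← Finset.sum_add_distrib]
    refine Finset.sum_congr rfl fun x _ => ?_
    rw [hf x]
    have := key (a1 x) (a2 x) (ip u x)
    push_cast at this ⊢
    rw [this]
  set A : ℤ := WZ a2 u with hA
  set B : ℤ := WZ b u with hB
  have hwa : WHT a2 u = (A : ℂ) := WHT_eq_WZ a2 u
  have hwb : WHT b u = (B : ℂ) := WHT_eq_WZ b u
  -- norm computation
  have habs : ‖GWT 4 f u‖ ^ 2 = ((A:ℝ)^2 + (B:ℝ)^2) / 2 := by
    rw [hdec, hwa, hwb, Complex.sq_norm, Complex.normSq_apply]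
    simp [Complex.add_re, Complex.add_im, Complex.mul_re, Complex.mul_im, Complex.div_re,
      Complex.div_im, Complex.normSq_apply]
    ring
  have h2n : ((A:ℝ)^2 + (B:ℝ)^2) / 2 = 2^n := by
    rw [← habs, hgb u, ← pow_mul]
    congr 1
    omega
  have hint : A^2 + B^2 = 2 * 4^(n/2) := by
    have h4 : ((2:ℝ))^n = 4^(n/2) := by
      rw [show (4:ℝ) = 2^2 by norm_num, ← pow_mul]
      congr 1
      omega
    have : (A:ℝ)^2 + (B:ℝ)^2 = 2 * 4^(n/2) := by
      rw [← h4]; linarith [h2n]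
    exact_mod_cast this
  have hA2 : A^2 = 4^(n/2) := sq_of_sq_add_sq (n/2) A B hint
  have hB2 : B^2 = 4^(n/2) := by
    have := sq_of_sq_add_sq (n/2) B A (by linarith [hint])
    exact this
  have h4r : ((4:ℤ):ℝ)^(n/2) = ((2:ℝ)^(n/2))^2 := by
    push_cast
    rw [← pow_mul, show (4:ℝ) = 2^2 by norm_num, ← pow_mul]
    ring_nf
  constructor
  · rw [hwa]
    apply abs_of_sq _ (by positivity)
    rw [Complex.sq_norm, Complex.normSq_intCast, ← h4r]
    exact_mod_cast (by linear_combination hA2 : A * A = 4^(n/2))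
  · rw [hwb]
    apply abs_of_sq _ (by positivity)
    rw [Complex.sq_norm, Complex.normSq_intCast, ← h4r]
    exact_mod_cast (by linear_combination hB2 : B * B = 4^(n/2))
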